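/- arXiv:1211.5885 — 2 statements merged into one kernel-verified Lean document; each statement's English description precedes it below -/
import Mathlib

section
/- Let T(ω,ξ,y)=(θω, g_ω(ξ), h_{ω,ξ}(y)) be a random map on Ω×Ξ×ℝ^d as in the double skew product setting, and let K⊆Ω×Ξ×ℝ^d be a T-invariant random compact set (over base Ω). Then the family of sets K(ω,ξ)={y∈ℝ^d : (ω,ξ,y)∈K} is a random compact set over the base Ω×Ξ (i.e. (ω,ξ)↦d(y,K(ω,ξ)) is measurable for each y∈ℝ^d and each K(ω,ξ) is compact), and h_{ω,ξ}(K(ω,ξ)) = K(θω, g_ω(ξ)) for P-a.e. ω∈Ω and all ξ∈Ξ. -/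
open MeasureTheory Metric Set
open scoped ENNReal NNReal


lemma phi_lip {X Y : Type*} [MetricSpace X] [MetricSpace Y] (ξ : X) (y : Y) (n : ℕ)
    (q q' : X × Y) :
    (n : ℝ) * dist ξ q.1 + dist y q.2
      ≤ ((n : ℝ) * dist ξ q'.1 + dist y q'.2) + ((n : ℝ) + 1) * dist q' q := by
  have h1 : dist ξ q.1 ≤ dist ξ q'.1 + dist q'.1 q.1 := dist_triangle _ _ _
  have h2 : dist y q.2 ≤ dist y q'.2 + dist q'.2 q.2 := dist_triangle _ _ _
  have h3 : dist q'.1 q.1 ≤ dist q' q := by rw [Prod.dist_eq]; exact le_max_left _ _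
  have h4 : dist q'.2 q.2 ≤ dist q' q := by rw [Prod.dist_eq]; exact le_max_right _ _
  have hn : (0:ℝ) ≤ (n:ℝ) := Nat.cast_nonneg n
  have h5 := mul_le_mul_of_nonneg_left h1 hn
  have h6 := mul_le_mul_of_nonneg_left h3 hn
  nlinarith [dist_nonneg (x := q') (y := q)]

lemma slice_compact {X Y : Type*} [MetricSpace X] [MetricSpace Y] {S : Set (X × Y)}
    (hS : IsCompact S) (ξ : X) : IsCompact {z | (ξ, z) ∈ S} := by
  have h1 : IsCompact (S ∩ Prod.fst ⁻¹' {ξ}) :=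
    hS.inter_right (isClosed_singleton.preimage continuous_fst)
  have h2 : {z | (ξ, z) ∈ S} = Prod.snd '' (S ∩ Prod.fst ⁻¹' {ξ}) := by
    ext z
    constructor
    · intro hz; exact ⟨(ξ, z), ⟨hz, rfl⟩, rfl⟩
    · rintro ⟨⟨a, b⟩, ⟨hab, ha⟩, rfl⟩
      simp only [mem_preimage, mem_singleton_iff] at ha
      subst ha; exact hab
  rw [h2]
  exact h1.image continuous_snd

lemma key_formula {X Y : Type*} [MetricSpace X] [MetricSpace Y] {S : Set (X × Y)}
    (hS : IsCompact S) (D : ℕ → X × Y) (hD : DenseRange D) (ξ : X) (y : Y) :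
    infDist y {z | (ξ, z) ∈ S} =
      (⨆ n : ℕ, ⨅ i : ℕ, ENNReal.ofReal
        ((n : ℝ) * dist ξ (D i).1 + dist y (D i).2 + ((n : ℝ) + 1) * infDist (D i) S)).toReal := by
  set φ : ℕ → X × Y → ℝ := fun n q => (n : ℝ) * dist ξ q.1 + dist y q.2 with hφ
  have φnonneg : ∀ n q, 0 ≤ φ n q := fun n q =>
    add_nonneg (mul_nonneg (Nat.cast_nonneg n) dist_nonneg) dist_nonneg
  have φcont : ∀ n, Continuous (φ n) := fun n => by

    exact ((continuous_const.mul ((continuous_const.dist (continuous_fst)))).add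
      (continuous_const.dist continuous_snd))
  rcases S.eq_empty_or_nonempty with hSe | hSne
  · -- S empty
    have hslice : {z | (ξ, z) ∈ S} = (∅ : Set Y) := by
      ext z; simp [hSe]
    have hzero : ∀ n : ℕ, (⨅ i : ℕ, ENNReal.ofReal
        ((n : ℝ) * dist ξ (D i).1 + dist y (D i).2 + ((n : ℝ) + 1) * infDist (D i) S)) = 0 := by
      intro n
      refine le_antisymm ?_ zero_le
      refine ENNReal.le_of_forall_pos_le_add fun ε hε _ => ?_
      have hεR : (0 : ℝ) < (ε : ℝ) := hε
      have hpos : (0 : ℝ) < (ε : ℝ) / ((n : ℝ) + 1) := by positivity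
      obtain ⟨i, hi⟩ := hD.exists_dist_lt (ξ, y) hpos
      have hIDe : infDist (D i) S = 0 := by rw [hSe, infDist_empty]
      have hb := phi_lip ξ y n (D i) (ξ, y)
      simp only [dist_self, mul_zero, zero_add, add_zero] at hb
      have hval : (n : ℝ) * dist ξ (D i).1 + dist y (D i).2 + ((n : ℝ) + 1) * infDist (D i) S
          ≤ (ε : ℝ) := by
        rw [hIDe, mul_zero, add_zero]
        have : ((n : ℝ) + 1) * dist (ξ, y) (D i) ≤ ((n : ℝ) + 1) * ((ε : ℝ) / ((n : ℝ) + 1)) := by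
          have hn1 : (0:ℝ) ≤ (n:ℝ) + 1 := by positivity
          exact mul_le_mul_of_nonneg_left hi.le hn1
        rw [mul_div_cancel₀ _ (by positivity : ((n:ℝ)+1) ≠ 0)] at this
        linarith [hb]
      calc (⨅ i : ℕ, ENNReal.ofReal
            ((n : ℝ) * dist ξ (D i).1 + dist y (D i).2 + ((n : ℝ) + 1) * infDist (D i) S))
          ≤ ENNReal.ofReal
            ((n : ℝ) * dist ξ (D i).1 + dist y (D i).2 + ((n : ℝ) + 1) * infDist (D i) S) :=
            iInf_le _ i
        _ ≤ ENNReal.ofReal (ε : ℝ) := ENNReal.ofReal_le_ofReal hval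
        _ = (ε : ℝ≥0∞) := ENNReal.ofReal_coe_nnreal
        _ ≤ 0 + ε := by rw [zero_add]
    simp only [hzero, hslice, infDist_empty, iSup_const, ENNReal.toReal_zero]
  · -- S nonempty
    set b : ℕ → ℝ := fun n => sInf (φ n '' S) with hb
    have hbdd : ∀ n, BddBelow (φ n '' S) := fun n =>
      ⟨0, by rintro _ ⟨q, hq, rfl⟩; exact φnonneg n q⟩
    have bLB : ∀ n, ∀ q ∈ S, b n ≤ φ n q := fun n q hq =>
      csInf_le (hbdd n) (mem_image_of_mem _ hq)
    have bmin : ∀ n, ∃ q₀ ∈ S, b n = φ n q₀ := by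
      intro n
      obtain ⟨q₀, hq₀S, hq₀min⟩ := hS.exists_isMinOn hSne (φcont n).continuousOn
      exact ⟨q₀, hq₀S, IsLeast.csInf_eq ⟨mem_image_of_mem _ hq₀S, by
        rintro _ ⟨q, hq, rfl⟩; exact hq₀min hq⟩⟩
    have L1 : ∀ n : ℕ, (⨅ i : ℕ, ENNReal.ofReal
        ((n : ℝ) * dist ξ (D i).1 + dist y (D i).2 + ((n : ℝ) + 1) * infDist (D i) S))
        = ENNReal.ofReal (b n) := by
      intro n
      obtain ⟨q₀, hq₀S, hq₀⟩ := bmin n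
      apply le_antisymm
      · refine ENNReal.le_of_forall_pos_le_add fun ε hε _ => ?_
        have hεR : (0 : ℝ) < (ε : ℝ) := hε
        have hpos : (0 : ℝ) < (ε : ℝ) / (2 * ((n : ℝ) + 1)) := by positivity
        obtain ⟨i, hi⟩ := hD.exists_dist_lt q₀ hpos
        have h1 : infDist (D i) S ≤ dist (D i) q₀ := infDist_le_dist_of_mem hq₀S
        have h2 : φ n (D i) ≤ φ n q₀ + ((n : ℝ) + 1) * dist q₀ (D i) := phi_lip ξ y n (D i) q₀
        have hval : φ n (D i) + ((n : ℝ) + 1) * infDist (D i) S ≤ b n + (ε : ℝ) := by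
          have h3 : ((n:ℝ)+1) * infDist (D i) S ≤ ((n:ℝ)+1) * dist q₀ (D i) := by
            rw [dist_comm (D i) q₀] at h1
            exact mul_le_mul_of_nonneg_left h1 (by positivity)
          have h4 : 2 * (((n:ℝ)+1) * dist q₀ (D i)) ≤ (ε : ℝ) := by
            have := mul_le_mul_of_nonneg_left hi.le (by positivity : (0:ℝ) ≤ 2*((n:ℝ)+1))
            calc 2 * (((n:ℝ)+1) * dist q₀ (D i)) = 2*((n:ℝ)+1) * dist q₀ (D i) := by ring
              _ ≤ 2*((n:ℝ)+1) * ((ε:ℝ) / (2 * ((n : ℝ) + 1))) := this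
              _ = (ε : ℝ) := by field_simp
          linarith [hq₀ ▸ le_refl (b n)]
        calc (⨅ i : ℕ, ENNReal.ofReal
              ((n : ℝ) * dist ξ (D i).1 + dist y (D i).2 + ((n : ℝ) + 1) * infDist (D i) S))
            ≤ ENNReal.ofReal (φ n (D i) + ((n : ℝ) + 1) * infDist (D i) S) := iInf_le _ i
          _ ≤ ENNReal.ofReal (b n + (ε : ℝ)) := ENNReal.ofReal_le_ofReal hval
          _ ≤ ENNReal.ofReal (b n) + ENNReal.ofReal (ε : ℝ) := ENNReal.ofReal_add_le
          _ = ENNReal.ofReal (b n) + (ε : ℝ≥0∞) := by rw [ENNReal.ofReal_coe_nnreal]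
      · refine le_iInf fun i => ?_
        apply ENNReal.ofReal_le_ofReal
        obtain ⟨q₁, hq₁S, hq₁⟩ := hS.exists_infDist_eq_dist hSne (D i)
        have h2 : φ n q₁ ≤ φ n (D i) + ((n : ℝ) + 1) * dist (D i) q₁ := phi_lip ξ y n q₁ (D i)
        have h3 : b n ≤ φ n q₁ := bLB n q₁ hq₁S
        simp only [hφ] at h2 h3
        rw [hq₁]
        linarith
    simp only [L1]
    rcases ({z | (ξ, z) ∈ S} : Set Y).eq_empty_or_nonempty with hsle | hslne
    · -- slice empty : sup is ⊤
      obtain ⟨qs, hqsS, hqsmin⟩ := hS.exists_isMinOn hSne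
        ((continuous_const.dist continuous_fst)).continuousOn
      set δ := dist ξ qs.1 with hδdef
      have hδ : 0 < δ := by
        rcases eq_or_lt_of_le (dist_nonneg : (0:ℝ) ≤ dist ξ qs.1) with heq | hlt
        · exfalso
          have : ξ = qs.1 := by rwa [eq_comm, dist_eq_zero] at heq
          have : qs.2 ∈ {z | (ξ, z) ∈ S} := by
            simp only [mem_setOf_eq, this]; exact hqsS
          rw [hsle] at this; exact this
        · exact hlt
      have hbn : ∀ n : ℕ, (n : ℝ) * δ ≤ b n := by
        intro n
        refine le_csInf (hSne.image _) ?_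
        rintro _ ⟨q, hq, rfl⟩
        have : δ ≤ dist ξ q.1 := hqsmin hq
        have h5 := mul_le_mul_of_nonneg_left this (Nat.cast_nonneg (α := ℝ) n)
        have := dist_nonneg (x := y) (y := q.2)
        simp only [hφ]; linarith
      have htop : (⨆ n : ℕ, ENNReal.ofReal (b n)) = ⊤ := by
        rw [iSup_eq_top]
        intro c hc
        obtain ⟨n, hn⟩ := exists_nat_gt (c.toReal / δ)
        refine ⟨n, ?_⟩
        have hcb : c.toReal < b n := by
          have : c.toReal < (n : ℝ) * δ := by
            rw [div_lt_iff₀ hδ] at hn; linarith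
          linarith [hbn n]
        calc c = ENNReal.ofReal c.toReal := (ENNReal.ofReal_toReal hc.ne).symm
          _ < ENNReal.ofReal (b n) := by
              rw [ENNReal.ofReal_lt_ofReal_iff (lt_of_le_of_lt ENNReal.toReal_nonneg hcb)]
              exact hcb
      rw [htop, hsle]
      simp [infDist_empty]
    · -- slice nonempty
      set r := infDist y {z | (ξ, z) ∈ S} with hr
      have hslc : IsCompact {z | (ξ, z) ∈ S} := slice_compact hS ξ
      obtain ⟨z₀, hz₀, hz₀d⟩ := hslc.exists_infDist_eq_dist hslne y
      have hble : ∀ n, b n ≤ r := by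
        intro n
        have : φ n (ξ, z₀) = dist y z₀ := by simp [hφ]
        have h6 := bLB n (ξ, z₀) hz₀
        rw [this] at h6
        rw [hr, hz₀d]; exact h6
      have hBdd : BddAbove (range b) := ⟨r, by rintro _ ⟨n, rfl⟩; exact hble n⟩
      set c := ⨆ n, b n with hc
      have hbc : ∀ n, b n ≤ c := fun n => le_ciSup hBdd n
      -- r ≤ c via compactness / FIP
      have hrc : r ≤ c := by
        set t : ℕ → Set (X × Y) := fun n => S ∩ {q | φ n q ≤ c} with ht
        have htsub : ∀ n, t (n + 1) ⊆ t n := by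
          intro n q hq
          refine ⟨hq.1, ?_⟩
          have h7 : φ n q ≤ φ (n + 1) q := by
            simp only [hφ, Nat.cast_add, Nat.cast_one]
            have := dist_nonneg (x := ξ) (y := q.1)
            nlinarith
          exact le_trans h7 hq.2
        have htne : ∀ n, (t n).Nonempty := by
          intro n
          obtain ⟨q₀, hq₀S, hq₀⟩ := bmin n
          exact ⟨q₀, hq₀S, by rw [mem_setOf_eq, ← hq₀]; exact hbc n⟩
        have htcl : ∀ n, IsClosed (t n) :=
          fun n => hS.isClosed.inter (isClosed_le (φcont n) continuous_const)
        have ht0 : IsCompact (t 0) := hS.inter_right (isClosed_le (φcont 0) continuous_const)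
        obtain ⟨q, hq⟩ := IsCompact.nonempty_iInter_of_sequence_nonempty_isCompact_isClosed
          t htsub htne ht0 htcl
        simp only [mem_iInter] at hq
        have hqS : q ∈ S := (hq 0).1
        have hφq : ∀ n : ℕ, φ n q ≤ c := fun n => (hq n).2
        have hd0 : dist ξ q.1 = 0 := by
          by_contra hne
          have hdpos : 0 < dist ξ q.1 := lt_of_le_of_ne dist_nonneg (Ne.symm hne)
          obtain ⟨n, hn⟩ := exists_nat_gt (c / dist ξ q.1)
          have h8 : c < (n : ℝ) * dist ξ q.1 := by
            rw [div_lt_iff₀ hdpos] at hn; linarith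
          have h9 : (n : ℝ) * dist ξ q.1 ≤ φ n q := by
            have := dist_nonneg (x := y) (y := q.2)
            simp only [hφ]; linarith
          linarith [hφq n]
        have hq1 : ξ = q.1 := by rwa [dist_eq_zero] at hd0
        have hmem : q.2 ∈ {z | (ξ, z) ∈ S} := by
          simp only [mem_setOf_eq, hq1]
          exact (Prod.mk.eta (p := q)) ▸ hqS
        have h10 : r ≤ dist y q.2 := infDist_le_dist_of_mem hmem
        have h11 : dist y q.2 ≤ c := by
          have := hφq 0
          simp only [hφ, Nat.cast_zero, zero_mul, zero_add] at this
          exact this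
        linarith
      have hub : (⨆ n, ENNReal.ofReal (b n)) ≤ ENNReal.ofReal r :=
        iSup_le fun n => ENNReal.ofReal_le_ofReal (hble n)
      have hlb : ENNReal.ofReal r ≤ ⨆ n, ENNReal.ofReal (b n) := by
        refine ENNReal.le_of_forall_pos_le_add fun ε hε _ => ?_
        have hεR : (0 : ℝ) < (ε : ℝ) := hε
        have : c - (ε : ℝ) < ⨆ n, b n := by rw [← hc]; linarith
        obtain ⟨n, hn⟩ := exists_lt_of_lt_ciSup this
        have h12 : r ≤ b n + (ε : ℝ) := by linarith
        calc ENNReal.ofReal r ≤ ENNReal.ofReal (b n + (ε : ℝ)) := ENNReal.ofReal_le_ofReal h12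
          _ ≤ ENNReal.ofReal (b n) + ENNReal.ofReal (ε : ℝ) := ENNReal.ofReal_add_le
          _ = ENNReal.ofReal (b n) + (ε : ℝ≥0∞) := by rw [ENNReal.ofReal_coe_nnreal]
          _ ≤ (⨆ n, ENNReal.ofReal (b n)) + ε := by
              gcongr
              exact le_iSup (fun n => ENNReal.ofReal (b n)) n
      rw [le_antisymm hub hlb, ENNReal.toReal_ofReal infDist_nonneg]

/-- If `K ⊆ Ω × Ξ × ℝ^d` is a `T`-invariant random compact set for
a double skew product `T(ω,ξ,y) = (θω, g_ω(ξ), h_{ω,ξ}(y))`, then the fibres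
`K(ω,ξ) = {y : (ω,ξ,y) ∈ K}` form a random compact set over the base `Ω × Ξ`
(each `K(ω,ξ)` is compact and `(ω,ξ) ↦ dist(y, K(ω,ξ))` is product-measurable for
each `y`), and `h_{ω,ξ}(K(ω,ξ)) = K(θω, g_ω(ξ))` for `P`-a.e. `ω` and all `ξ`. -/
theorem stmt12 {Ω Ξ : Type*} [MeasurableSpace Ω] [MetricSpace Ξ] [CompactSpace Ξ]
    [MeasurableSpace Ξ] [BorelSpace Ξ] {d : ℕ}
    (P : Measure Ω) [IsProbabilityMeasure P]
    (θ θinv : Ω → Ω) (hθm : Measurable θ) (hθim : Measurable θinv)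
    (hli : Function.LeftInverse θinv θ) (hri : Function.RightInverse θinv θ)
    (herg : Ergodic θ P)
    (g : Ω → Ξ → Ξ) (hgc : ∀ ω, Continuous (g ω))
    (hgb : ∀ ω, Function.Bijective (g ω))
    (hgm : ∀ ξ, Measurable fun ω => g ω ξ)
    (h : Ω → Ξ → EuclideanSpace ℝ (Fin d) → EuclideanSpace ℝ (Fin d))
    (hhc : ∀ ω, Continuous fun p : Ξ × EuclideanSpace ℝ (Fin d) => h ω p.1 p.2)
    (hhm : ∀ ξ y, Measurable fun ω => h ω ξ y)
    (K : Set (Ω × Ξ × EuclideanSpace ℝ (Fin d)))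
    (hKc : ∀ ω, IsCompact {p : Ξ × EuclideanSpace ℝ (Fin d) | (ω, p) ∈ K})
    (hKm : ∀ p : Ξ × EuclideanSpace ℝ (Fin d),
      Measurable fun ω => infDist p {q : Ξ × EuclideanSpace ℝ (Fin d) | (ω, q) ∈ K})
    (hKinv : ∀ᵐ ω ∂P,
      (fun p : Ξ × EuclideanSpace ℝ (Fin d) => (g ω p.1, h ω p.1 p.2)) ''
        {p | (ω, p) ∈ K} = {p | (θ ω, p) ∈ K}) :
    (∀ ω ξ, IsCompact {y | (ω, ξ, y) ∈ K}) ∧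
    (∀ y : EuclideanSpace ℝ (Fin d),
      Measurable fun q : Ω × Ξ => infDist y {z | (q.1, q.2, z) ∈ K}) ∧
    ∀ᵐ ω ∂P, ∀ ξ : Ξ,
      h ω ξ '' {y | (ω, ξ, y) ∈ K} = {y | (θ ω, g ω ξ, y) ∈ K} := by
  rcases isEmpty_or_nonempty Ξ with hΞ | hΞ
  · exact ⟨fun ω ξ => isEmptyElim ξ, fun y => measurable_of_empty _,
      Filter.Eventually.of_forall fun ω ξ => isEmptyElim ξ⟩
  refine ⟨fun ω ξ => slice_compact (hKc ω) ξ, ?_, ?_⟩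
  · intro y
    haveI : Nonempty (Ξ × EuclideanSpace ℝ (Fin d)) := ⟨hΞ.some, 0⟩
    set D := TopologicalSpace.denseSeq (Ξ × EuclideanSpace ℝ (Fin d)) with hDdef
    have hD : DenseRange D := TopologicalSpace.denseRange_denseSeq _
    have hfe : (fun q : Ω × Ξ => infDist y {z | (q.1, q.2, z) ∈ K}) =
        fun q : Ω × Ξ => (⨆ n : ℕ, ⨅ i : ℕ, ENNReal.ofReal
          ((n : ℝ) * dist q.2 (D i).1 + dist y (D i).2
            + ((n : ℝ) + 1) * infDist (D i) {p | (q.1, p) ∈ K})).toReal :=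
      funext fun q => key_formula (hKc q.1) D hD q.2 y
    rw [hfe]
    apply Measurable.ennreal_toReal
    refine Measurable.iSup fun n => Measurable.iInf fun i => ?_
    apply ENNReal.measurable_ofReal.comp
    refine Measurable.add (Measurable.add ?_ measurable_const) ?_
    · exact measurable_const.mul
        ((Continuous.measurable (continuous_id.dist continuous_const)).comp measurable_snd)
    · exact measurable_const.mul ((hKm (D i)).comp measurable_fst)
  · filter_upwards [hKinv] with ω hω ξ
    ext z
    simp only [Set.mem_image, Set.mem_setOf_eq]
    constructor
    · rintro ⟨y, hy, rfl⟩
      have hmem : ((g ω ξ, h ω ξ y) : Ξ × EuclideanSpace ℝ (Fin d)) ∈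
          ((fun p : Ξ × EuclideanSpace ℝ (Fin d) => (g ω p.1, h ω p.1 p.2)) ''
            {p | (ω, p) ∈ K}) := ⟨(ξ, y), hy, rfl⟩
      rw [hω] at hmem
      exact hmem
    · intro hz
      have hz' : ((g ω ξ, z) : Ξ × EuclideanSpace ℝ (Fin d)) ∈ {p | (θ ω, p) ∈ K} := hz
      rw [← hω] at hz'
      obtain ⟨⟨ξ', y'⟩, hmem, heq⟩ := hz'
      have h1 : g ω ξ' = g ω ξ := congrArg Prod.fst heq
      have h2 : ξ' = ξ := (hgb ω).1 h1
      subst h2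
      exact ⟨y', hmem, congrArg Prod.snd heq⟩
end

section
/- A random homeomorphism θ⋉g on Ω×Ξ is transitive if and only if the following condition (T1) holds: for all non-empty random open sets U,V⊆Ω×Ξ there exists n∈ℕ such that (θ⋉g)^n(U)∩V is non-empty (i.e. {ω : ((θ⋉g)^n(U)∩V)(ω)≠∅} has positive P-measure). -/
open MeasureTheory Metric

/-- Iterates of the fibre maps: `giter θ g n ω = g_{θ^{n-1}ω} ∘ ⋯ ∘ g_ω`. -/
def giter {Ω Ξ : Type*} (θ : Ω → Ω) (g : Ω → Ξ → Ξ) : ℕ → Ω → Ξ → Ξ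
  | 0 => fun _ ξ => ξ
  | n + 1 => fun ω ξ => g (θ^[n] ω) (giter θ g n ω ξ)

section Aux

open TopologicalSpace Function

variable {Ω Ξ : Type*}

lemma stmt18_infDist_univ [MetricSpace Ξ] (x : Ξ) : infDist x (Set.univ : Set Ξ) = 0 := by
  have h := infDist_le_dist_of_mem (s := (Set.univ : Set Ξ)) (x := x) (Set.mem_univ x)
  simp only [dist_self] at h
  exact le_antisymm h infDist_nonneg

open Classical in
lemma stmt18_infEdist_image_open [MetricSpace Ξ] [SeparableSpace Ξ] [Nonempty Ξ]
    {O : Set Ξ} (hO : IsOpen O) {f : Ξ → Ξ} (hf : Continuous f) (ξ : Ξ) :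
    EMetric.infEdist ξ (f '' O) =
      ⨅ n : ℕ, if denseSeq Ξ n ∈ O then edist ξ (f (denseSeq Ξ n)) else ⊤ := by
  set e := denseSeq Ξ with he_def
  have hd : Dense (Set.range e) := denseRange_denseSeq Ξ
  have key : EMetric.infEdist ξ (f '' O) = EMetric.infEdist ξ (f '' (O ∩ Set.range e)) := by
    refine le_antisymm (EMetric.infEdist_anti (Set.image_mono Set.inter_subset_left)) ?_
    have h1 : f '' O ⊆ closure (f '' (O ∩ Set.range e)) :=
      (Set.image_mono (hd.open_subset_closure_inter hO)).trans
        (image_closure_subset_closure_image hf)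
    calc EMetric.infEdist ξ (f '' (O ∩ Set.range e))
        = EMetric.infEdist ξ (closure (f '' (O ∩ Set.range e))) := EMetric.infEdist_closure.symm
      _ ≤ EMetric.infEdist ξ (f '' O) := EMetric.infEdist_anti h1
  have h0 : O ∩ Set.range e = e '' {n | e n ∈ O} := by
    ext x
    constructor
    · rintro ⟨hxO, n, rfl⟩; exact ⟨n, hxO, rfl⟩
    · rintro ⟨n, hn, rfl⟩; exact ⟨hn, n, rfl⟩
  rw [key, h0, Set.image_image]
  simp only [EMetric.infEdist, Metric.infEDist]
  rw [iInf_image]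
  refine iInf_congr fun n => ?_
  simp only [Set.mem_setOf_eq]
  exact iInf_eq_if _

open Classical in
lemma stmt18_measurable_infEdist_image [MetricSpace Ξ] [CompactSpace Ξ] [MeasurableSpace Ξ]
    [BorelSpace Ξ] [MeasurableSpace Ω]
    {O : Ω → Set Ξ} (hO : ∀ ω, IsOpen (O ω)) (hmem : ∀ η : Ξ, MeasurableSet {ω | η ∈ O ω})
    {F : Ω → Ξ → Ξ} (hFc : ∀ ω, Continuous (F ω)) (hFm : ∀ η, Measurable fun ω => F ω η)
    (ξ : Ξ) : Measurable fun ω => EMetric.infEdist ξ (F ω '' O ω) := by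
  haveI : Nonempty Ξ := ⟨ξ⟩
  have h : (fun ω => EMetric.infEdist ξ (F ω '' O ω)) = fun ω =>
      ⨅ n : ℕ, if denseSeq Ξ n ∈ O ω then edist ξ (F ω (denseSeq Ξ n)) else ⊤ := by
    funext ω; exact stmt18_infEdist_image_open (hO ω) (hFc ω) ξ
  rw [h]
  exact Measurable.iInf fun n =>
    Measurable.ite (hmem _) (measurable_const.edist (hFm _)) measurable_const

lemma stmt18_giter_cont [TopologicalSpace Ξ] {θ : Ω → Ω} {g : Ω → Ξ → Ξ}
    (hgc : ∀ ω, Continuous (g ω)) : ∀ (n : ℕ) (ω : Ω), Continuous (giter θ g n ω)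
  | 0, _ => continuous_id
  | n + 1, ω => (hgc _).comp (stmt18_giter_cont hgc n ω)

lemma stmt18_giter_surj {θ : Ω → Ω} {g : Ω → Ξ → Ξ}
    (hgb : ∀ ω, Function.Bijective (g ω)) : ∀ (n : ℕ) (ω : Ω), Function.Surjective (giter θ g n ω)
  | 0, _ => surjective_id
  | n + 1, ω => ((hgb _).2).comp (stmt18_giter_surj hgb n ω)

lemma stmt18_giter_meas [MeasurableSpace Ω] [MetricSpace Ξ] [CompactSpace Ξ] [MeasurableSpace Ξ]
    [BorelSpace Ξ] {θ : Ω → Ω} {g : Ω → Ξ → Ξ} (hθm : Measurable θ)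
    (hgc : ∀ ω, Continuous (g ω)) (hgm : ∀ ξ, Measurable fun ω => g ω ξ) (n : ℕ) (η : Ξ) :
    Measurable fun ω => giter θ g n ω η := by
  induction n with
  | zero => exact measurable_const
  | succ n ih =>
    have hG : Measurable (Function.uncurry fun ξ ω => g ω ξ) :=
      measurable_uncurry_of_continuous_of_measurable hgc hgm
    exact hG.comp (ih.prodMk (hθm.iterate n))

lemma stmt18_pos_inter [MeasurableSpace Ω] {P : Measure Ω} {S T N : Set Ω}
    (hS : 0 < P S) (hsub : S ⊆ (S ∩ T) ∪ N) (hN : P N = 0) : 0 < P (S ∩ T) := by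
  by_contra h
  rw [not_lt, le_zero_iff] at h
  have h2 : P S ≤ P (S ∩ T) + P N := (measure_mono hsub).trans (measure_union_le _ _)
  rw [h, hN, add_zero] at h2
  exact hS.ne' (le_zero_iff.mp h2)

lemma stmt18_exists_pos [MeasurableSpace Ω] {P : Measure Ω} {S : Set Ω} {f : ℕ → Set Ω}
    (h : 0 < P S) (hsub : S ⊆ ⋃ n, f n) : ∃ n, 0 < P (S ∩ f n) := by
  by_contra hc
  push_neg at hc
  have h2 : P S ≤ P (⋃ n, S ∩ f n) := by
    refine measure_mono fun ω hω => ?_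
    obtain ⟨n, hn⟩ := Set.mem_iUnion.mp (hsub hω)
    exact Set.mem_iUnion.mpr ⟨n, hω, hn⟩
  rw [measure_iUnion_null fun n => le_zero_iff.mp (not_lt.mp (hc n).not_gt)] at h2
  exact h.ne' (le_zero_iff.mp h2)

end Aux

/-- A random homeomorphism `θ ⋉ g` on `Ω × Ξ` is transitive if and
only if (T1) holds: for all non-empty random open sets `U, V ⊆ Ω × Ξ` there is
`n ∈ ℕ` such that `(θ ⋉ g)^n(U) ∩ V` is non-empty, where the fibres of
`(θ ⋉ g)^n(U)` are `g^n_{θ^{-n}ω}(U(θ^{-n}ω))` and a random set is non-empty if its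
fibre is non-empty on a set of positive `P`-measure. -/
theorem stmt18 {Ω Ξ : Type*} [MeasurableSpace Ω] [MetricSpace Ξ] [CompactSpace Ξ]
    [MeasurableSpace Ξ] [BorelSpace Ξ]
    (P : Measure Ω) [IsProbabilityMeasure P]
    (θ θinv : Ω → Ω) (hθm : Measurable θ) (hθim : Measurable θinv)
    (hli : Function.LeftInverse θinv θ) (hri : Function.RightInverse θinv θ)
    (herg : Ergodic θ P)
    (g : Ω → Ξ → Ξ) (hgc : ∀ ω, Continuous (g ω))
    (hgb : ∀ ω, Function.Bijective (g ω))
    (hgm : ∀ ξ, Measurable fun ω => g ω ξ) :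
    (∀ L : Ω → Set Ξ, (∀ ω, IsClosed (L ω)) →
        (∀ ξ, Measurable fun ω => infDist ξ (L ω)) →
        (∀ᵐ ω ∂P, g ω '' L ω ⊆ L (θ ω)) →
        ((∀ᵐ ω ∂P, L ω = Set.univ) ∨ (∀ᵐ ω ∂P, IsNowhereDense (L ω)))) ↔
      (∀ U V : Ω → Set Ξ,
        (∀ ω, IsOpen (U ω)) → (∀ ξ, Measurable fun ω => infDist ξ (U ω)ᶜ) →
        (∀ ω, IsOpen (V ω)) → (∀ ξ, Measurable fun ω => infDist ξ (V ω)ᶜ) →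
        0 < P {ω | (U ω).Nonempty} → 0 < P {ω | (V ω).Nonempty} →
        ∃ n : ℕ, 0 < P {ω |
          (giter θ g n (θinv^[n] ω) '' U (θinv^[n] ω) ∩ V ω).Nonempty}) := by
  -- common setup
  have hmpθ : MeasurePreserving θ P P := herg.toMeasurePreserving
  have hmpi : MeasurePreserving θinv P P :=
    MeasurePreserving.symm (⟨⟨θ, θinv, hli, hri⟩, hθm, hθim⟩ : Ω ≃ᵐ Ω) hmpθ
  have hqmi : ∀ (n : ℕ) {N : Set Ω}, P N = 0 → P ((θinv^[n]) ⁻¹' N) = 0 := fun n _ hN =>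
    (hmpi.iterate n).quasiMeasurePreserving.preimage_null hN
  have hids : ∀ (n : ℕ) (ω : Ω), θ^[n] (θinv^[n] ω) = ω := fun n ω => hri.iterate n ω
  have hsucc : ∀ (k : ℕ) (ω : Ω), θinv^[k+1] (θ ω) = θinv^[k] ω := fun k ω => by
    rw [Function.iterate_succ_apply, hli ω]
  have hshift : ∀ (j n : ℕ), j ≤ n → ∀ ω, θ^[j] (θinv^[n] ω) = θinv^[n-j] ω := by
    intro j n hj ω
    have h : θinv^[n] ω = θinv^[j] (θinv^[n-j] ω) := by
      rw [← Function.iterate_add_apply]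
      congr 1
      omega
    rw [h]
    exact hri.iterate j _
  -- iterated invariance
  have hchain : ∀ (L : Ω → Set Ξ), (∀ᵐ ω ∂P, g ω '' L ω ⊆ L (θ ω)) → ∀ n : ℕ,
      ∀ᵐ ω ∂P, giter θ g n (θinv^[n] ω) '' L (θinv^[n] ω) ⊆ L ω := by
    intro L hinv n
    have hN : P {ω | ¬ (g ω '' L ω ⊆ L (θ ω))} = 0 := ae_iff.mp hinv
    have hBad : P (⋃ k : ℕ, (θinv^[k]) ⁻¹' {ω | ¬ (g ω '' L ω ⊆ L (θ ω))}) = 0 :=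
      measure_iUnion_null fun k => hqmi k hN
    rw [ae_iff]
    refine measure_mono_null ?_ hBad
    intro ω hω
    simp only [Set.mem_setOf_eq] at hω
    by_contra hB
    apply hω
    have hstep : ∀ k, k ≤ n →
        giter θ g k (θinv^[n] ω) '' L (θinv^[n] ω) ⊆ L (θ^[k] (θinv^[n] ω)) := by
      intro k
      induction k with
      | zero =>
        intro _
        intro ξ hξ
        obtain ⟨η, hη, rfl⟩ := hξ
        exact hη
      | succ k ih =>
        intro hk
        have h1 := ih (Nat.le_of_succ_le hk)
        have h2 : θ^[k] (θinv^[n] ω) ∉ ({ω | ¬ (g ω '' L ω ⊆ L (θ ω))} : Set Ω) := by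
          rw [hshift k n (le_of_lt hk) ω]
          intro hmem
          exact hB (Set.mem_iUnion.mpr ⟨n - k, hmem⟩)
        simp only [Set.mem_setOf_eq, not_not] at h2
        have hcomp : giter θ g (k+1) (θinv^[n] ω) '' L (θinv^[n] ω)
            = g (θ^[k] (θinv^[n] ω)) '' (giter θ g k (θinv^[n] ω) '' L (θinv^[n] ω)) := by
          rw [← Set.image_comp]
          rfl
        rw [hcomp, Function.iterate_succ_apply']
        exact (Set.image_mono h1).trans h2
    have h := hstep n le_rfl
    rwa [hids n ω] at h
  constructor
  · -- forward
    intro htrans U V hUo hUm hVo hVm hU0 hV0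
    by_cases hne : Nonempty Ξ
    swap
    · exfalso
      have hset : {ω | (U ω).Nonempty} = ∅ := by
        refine Set.eq_empty_iff_forall_notMem.mpr fun ω hω => ?_
        obtain ⟨ξ, -⟩ := hω
        exact hne ⟨ξ⟩
      rw [hset] at hU0
      simp at hU0
    classical
    set e := TopologicalSpace.denseSeq Ξ with he_def
    have hd : DenseRange e := TopologicalSpace.denseRange_denseSeq Ξ
    set Ut : Ω → Set Ξ := fun ω => {ξ | 0 < infDist ξ (U ω)ᶜ} with hUt_def
    set Vt : Ω → Set Ξ := fun ω => {ξ | 0 < infDist ξ (V ω)ᶜ} with hVt_def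
    have hUtsub : ∀ ω, Ut ω ⊆ U ω := by
      intro ω ξ hξ
      have hξ' : 0 < infDist ξ (U ω)ᶜ := hξ
      by_contra h
      exact hξ'.ne' (infDist_zero_of_mem h)
    have hVtsub : ∀ ω, Vt ω ⊆ V ω := by
      intro ω ξ hξ
      have hξ' : 0 < infDist ξ (V ω)ᶜ := hξ
      by_contra h
      exact hξ'.ne' (infDist_zero_of_mem h)
    have hUto : ∀ ω, IsOpen (Ut ω) :=
      fun ω => isOpen_lt continuous_const (continuous_infDist_pt _)
    have hVto : ∀ ω, IsOpen (Vt ω) :=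
      fun ω => isOpen_lt continuous_const (continuous_infDist_pt _)
    have hUtmem : ∀ η : Ξ, MeasurableSet {ω | η ∈ Ut ω} := fun η =>
      measurableSet_lt measurable_const (hUm η)
    have hVtmem : ∀ η : Ξ, MeasurableSet {ω | η ∈ Vt ω} := fun η =>
      measurableSet_lt measurable_const (hVm η)
    have hWsplit : ∀ (W : Ω → Set Ξ), (∀ ω, IsOpen (W ω)) →
        {ω | (W ω).Nonempty} ⊆
          {ω | ∃ m : ℕ, 0 < infDist (e m) (W ω)ᶜ} ∪ {ω | W ω = Set.univ} := by
      intro W hWo ω hω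
      obtain ⟨ξ, hξ⟩ := hω
      by_cases hu : W ω = Set.univ
      · exact Or.inr hu
      · left
        have hcne : ((W ω)ᶜ).Nonempty := Set.nonempty_compl.mpr hu
        have hpos : 0 < infDist ξ (W ω)ᶜ :=
          ((hWo ω).isClosed_compl.notMem_iff_infDist_pos hcne).mp (by simpa using hξ)
        obtain ⟨m, hm⟩ := hd.exists_mem_open
          (isOpen_lt continuous_const (continuous_infDist_pt ((W ω)ᶜ)))
          ⟨ξ, hpos⟩
        exact ⟨m, hm⟩
    set G := {ω | ∃ m : ℕ, 0 < infDist (e m) (U ω)ᶜ} with hG_def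
    set GV := {ω | ∃ m : ℕ, 0 < infDist (e m) (V ω)ᶜ} with hGV_def
    have hGmeas : MeasurableSet G := by
      have h : G = ⋃ m : ℕ, {ω | 0 < infDist (e m) (U ω)ᶜ} := by
        ext ω; simp [hG_def, Set.mem_iUnion]
      rw [h]
      exact MeasurableSet.iUnion fun m => measurableSet_lt measurable_const (hUm _)
    by_cases hSU : P {ω | U ω = Set.univ} = 0
    · -- U has no (relevant) full fibres
      have hPG : 0 < P G := by
        by_contra h
        rw [not_lt, le_zero_iff] at h
        have h2 : P {ω | (U ω).Nonempty} ≤ P G + P {ω | U ω = Set.univ} :=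
          (measure_mono (hWsplit U hUo)).trans (measure_union_le _ _)
        rw [h, hSU, add_zero] at h2
        exact hU0.ne' (le_zero_iff.mp h2)
      by_cases hGV0 : P GV = 0
      · -- case (c) : V has full fibres with positive measure
        have hSVpos : 0 < P {ω | V ω = Set.univ} := by
          by_contra h
          rw [not_lt, le_zero_iff] at h
          have h2 : P {ω | (V ω).Nonempty} ≤ P GV + P {ω | V ω = Set.univ} :=
            (measure_mono (hWsplit V hVo)).trans (measure_union_le _ _)
          rw [hGV0, h, add_zero] at h2
          exact hV0.ne' (le_zero_iff.mp h2)
        set E := ⋃ k : ℕ, (θinv^[k]) ⁻¹' G with hE_def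
        have hEm : MeasurableSet E := MeasurableSet.iUnion fun k => (hθim.iterate k) hGmeas
        have hEsub : E ⊆ θ ⁻¹' E := by
          intro ω hω
          obtain ⟨k, hk⟩ := Set.mem_iUnion.mp hω
          refine Set.mem_iUnion.mpr ⟨k + 1, ?_⟩
          show θinv^[k+1] (θ ω) ∈ G
          rw [hsucc k ω]
          exact hk
        rcases herg.ae_empty_or_univ_of_ae_le_preimage hEm.nullMeasurableSet
            hEsub.eventuallyLE with hE0 | hE1
        · exfalso
          have hPE : P E = 0 := by rw [measure_congr hE0]; exact measure_empty
          have hGE : G ⊆ E := fun ω hω => Set.mem_iUnion.mpr ⟨0, hω⟩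
          exact hPG.ne' (measure_mono_null hGE hPE)
        · have hEc : P Eᶜ = 0 := ae_eq_univ.mp hE1
          have h2 : 0 < P ({ω | V ω = Set.univ} ∩ E) := by
            refine stmt18_pos_inter hSVpos ?_ hEc
            intro ω hω
            by_cases h : ω ∈ E
            · exact Or.inl ⟨hω, h⟩
            · exact Or.inr h
          obtain ⟨k, hk⟩ := stmt18_exists_pos h2 (fun ω hω => hω.2)
          refine ⟨k, lt_of_lt_of_le hk (measure_mono ?_)⟩
          rintro ω ⟨⟨hVu, -⟩, hG2⟩
          obtain ⟨m, hm⟩ := hG2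
          refine ⟨giter θ g k (θinv^[k] ω) (e m),
            Set.mem_image_of_mem _ (hUtsub _ hm), ?_⟩
          rw [hVu]
          exact Set.mem_univ _
      · -- case (a) : main case
        have hGVpos : 0 < P GV := pos_iff_ne_zero.mpr hGV0
        set Im : ℕ → Ω → Set Ξ :=
          fun n ω => giter θ g n (θinv^[n] ω) '' Ut (θinv^[n] ω) with hIm_def
        set L : Ω → Set Ξ := fun ω => closure (⋃ n, Im n ω) with hL_def
        have hLc : ∀ ω, IsClosed (L ω) := fun ω => isClosed_closure
        have hLm : ∀ ξ, Measurable fun ω => infDist ξ (L ω) := by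
          intro ξ
          have heq : (fun ω => infDist ξ (L ω))
              = fun ω => (⨅ n, EMetric.infEdist ξ (Im n ω)).toReal := by
            funext ω
            calc infDist ξ (L ω) = infDist ξ (⋃ n, Im n ω) := infDist_closure
              _ = (EMetric.infEdist ξ (⋃ n, Im n ω)).toReal := rfl
              _ = (⨅ n, EMetric.infEdist ξ (Im n ω)).toReal := by
                  congr 1
                  simp only [EMetric.infEdist, Metric.infEDist, iInf_iUnion]
                  try exact iInf_comm
          rw [heq]
          refine (Measurable.iInf fun n => ?_).ennreal_toReal
          exact stmt18_measurable_infEdist_image (O := fun ω => Ut (θinv^[n] ω))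
            (fun ω => hUto _) (fun η => (hθim.iterate n) (hUtmem η))
            (F := fun ω => giter θ g n (θinv^[n] ω))
            (fun ω => stmt18_giter_cont hgc n _)
            (fun η => (stmt18_giter_meas hθm hgc hgm n η).comp (hθim.iterate n)) ξ
        have hLinv : ∀ᵐ ω ∂P, g ω '' L ω ⊆ L (θ ω) := by
          refine Filter.Eventually.of_forall fun ω => ?_
          have hIm1 : ∀ n, g ω '' Im n ω = Im (n+1) (θ ω) := by
            intro n
            show g ω '' (giter θ g n (θinv^[n] ω) '' Ut (θinv^[n] ω))
                = giter θ g (n+1) (θinv^[n+1] (θ ω)) '' Ut (θinv^[n+1] (θ ω))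
            have hfe : (g ω ∘ giter θ g n (θinv^[n] ω)) = giter θ g (n+1) (θinv^[n] ω) := by
              funext ξ
              show g ω (giter θ g n (θinv^[n] ω) ξ)
                  = g (θ^[n] (θinv^[n] ω)) (giter θ g n (θinv^[n] ω) ξ)
              rw [hids n ω]
            rw [hsucc n ω, ← Set.image_comp, hfe]
          calc g ω '' L ω ⊆ closure (g ω '' ⋃ n, Im n ω) :=
                image_closure_subset_closure_image (hgc ω)
            _ ⊆ L (θ ω) := by
                refine closure_mono ?_
                rw [Set.image_iUnion]
                refine Set.iUnion_subset fun n => ?_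
                rw [hIm1 n]
                exact Set.subset_iUnion (fun m => Im m (θ ω)) (n+1)
        rcases htrans L hLc hLm hLinv with hUniv | hNwd
        · by_contra hcon
          push_neg at hcon
          have hTz : ∀ n,
              P {ω | (giter θ g n (θinv^[n] ω) '' U (θinv^[n] ω) ∩ V ω).Nonempty} = 0 :=
            fun n => le_zero_iff.mp (hcon n)
          have hTn : ∀ n, P {ω | (Im n ω ∩ Vt ω).Nonempty} = 0 := by
            intro n
            refine measure_mono_null ?_ (hTz n)
            rintro ω ⟨ξ, hξI, hξV⟩
            exact ⟨ξ, Set.image_mono (hUtsub _) hξI, hVtsub _ hξV⟩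
          set Bad := {ω | ¬ L ω = Set.univ} ∪ ⋃ n, {ω | (Im n ω ∩ Vt ω).Nonempty}
            with hBad_def
          have hBadnull : P Bad = 0 :=
            measure_union_null (ae_iff.mp hUniv) (measure_iUnion_null hTn)
          have hpos : 0 < P (GV ∩ Badᶜ) := by
            refine stmt18_pos_inter hGVpos ?_ hBadnull
            intro ω hω
            by_cases h : ω ∈ Bad
            · exact Or.inr h
            · exact Or.inl ⟨hω, h⟩
          obtain ⟨ω, hωGV, hωB⟩ := nonempty_of_measure_ne_zero hpos.ne'
          have hωB' : ¬ (¬ L ω = Set.univ ∨ ω ∈ ⋃ n, {ω | (Im n ω ∩ Vt ω).Nonempty}) := hωB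
          push_neg at hωB'
          obtain ⟨hLu, hIn⟩ := hωB'
          obtain ⟨m, hm⟩ := hωGV
          have hdense : Dense (⋃ n, Im n ω) := by
            rw [dense_iff_closure_eq]
            exact hLu
          obtain ⟨ξ, hξo, hξu⟩ := hdense.inter_open_nonempty (Vt ω) (hVto ω) ⟨e m, hm⟩
          obtain ⟨n, hξn⟩ := Set.mem_iUnion.mp hξu
          exact absurd (Set.mem_iUnion.mpr ⟨n, (⟨ξ, hξn, hξo⟩ : (Im n ω ∩ Vt ω).Nonempty)⟩) hIn
        · exfalso
          have hsub : G ⊆ {ω | ¬ IsNowhereDense (L ω)} := by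
            rintro ω ⟨m, hm⟩
            simp only [Set.mem_setOf_eq]
            intro hnd
            have hUtL : Ut ω ⊆ L ω := by
              refine Set.Subset.trans ?_ subset_closure
              refine Set.Subset.trans ?_ (Set.subset_iUnion _ 0)
              intro ξ hξ
              exact ⟨ξ, hξ, rfl⟩
            have hint : Ut ω ⊆ interior (closure (L ω)) :=
              interior_maximal (hUtL.trans subset_closure) (hUto ω)
            have hnd' : interior (closure (L ω)) = ∅ := hnd
            rw [hnd'] at hint
            exact hint hm
          exact hPG.ne' (measure_mono_null hsub (ae_iff.mp hNwd))
    · -- case (b) : U has full fibres with positive measure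
      have hSUpos : 0 < P {ω | U ω = Set.univ} := pos_iff_ne_zero.mpr hSU
      set Q : Ω → Prop := fun ω => ∃ k : ℕ, U (θinv^[k] ω) = Set.univ with hQ_def
      set LM : Ω → Set Ξ := fun ω => {ξ : Ξ | Q ω} with hLM_def
      have hLMuniv : ∀ ω, Q ω → LM ω = Set.univ :=
        fun ω h => Set.eq_univ_of_forall fun ξ => h
      have hLMempty : ∀ ω, ¬ Q ω → LM ω = ∅ :=
        fun ω h => Set.eq_empty_iff_forall_notMem.mpr fun ξ hξ => h hξ
      have hLMc : ∀ ω, IsClosed (LM ω) := by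
        intro ω
        by_cases h : Q ω
        · rw [hLMuniv ω h]; exact isClosed_univ
        · rw [hLMempty ω h]; exact isClosed_empty
      have hLMm : ∀ ξ, Measurable fun ω => infDist ξ (LM ω) := by
        intro ξ
        have h : (fun ω => infDist ξ (LM ω)) = fun _ => 0 := by
          funext ω
          by_cases h : Q ω
          · rw [hLMuniv ω h]; exact stmt18_infDist_univ ξ
          · rw [hLMempty ω h]; exact infDist_empty
        rw [h]
        exact measurable_const
      have hLMinv : ∀ᵐ ω ∂P, g ω '' LM ω ⊆ LM (θ ω) := by
        refine Filter.Eventually.of_forall fun ω => ?_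
        by_cases h : Q ω
        · have hq : Q (θ ω) := by
            obtain ⟨k, hk⟩ := h
            exact ⟨k + 1, by rwa [hsucc k ω]⟩
          rw [hLMuniv _ hq]
          exact Set.subset_univ _
        · rw [hLMempty ω h]
          simp
      rcases htrans LM hLMc hLMm hLMinv with hUniv | hNwd
      · have hQnull : P {ω | ¬ Q ω} = 0 := by
          refine measure_mono_null ?_ (ae_iff.mp hUniv)
          intro ω hω
          simp only [Set.mem_setOf_eq] at hω ⊢
          intro hLu
          obtain ⟨ξ₀⟩ := hne
          exact hω (show ξ₀ ∈ LM ω from hLu ▸ Set.mem_univ ξ₀)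
        have h2 : 0 < P ({ω | (V ω).Nonempty} ∩ {ω | Q ω}) := by
          refine stmt18_pos_inter hV0 ?_ hQnull
          intro ω hω
          by_cases h : Q ω
          · exact Or.inl ⟨hω, h⟩
          · exact Or.inr h
        obtain ⟨k, hk⟩ := stmt18_exists_pos h2
          (f := fun k => {ω | U (θinv^[k] ω) = Set.univ})
          (by
            rintro ω ⟨-, k, hk⟩
            exact Set.mem_iUnion.mpr ⟨k, hk⟩)
        refine ⟨k, lt_of_lt_of_le hk (measure_mono ?_)⟩
        rintro ω ⟨⟨⟨ξv, hξv⟩, -⟩, hUu⟩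
        have himg : giter θ g k (θinv^[k] ω) '' U (θinv^[k] ω) = Set.univ := by
          rw [show U (θinv^[k] ω) = Set.univ from hUu, Set.image_univ]
          exact (stmt18_giter_surj hgb k _).range_eq
        refine ⟨ξv, ?_, hξv⟩
        rw [himg]
        exact Set.mem_univ _
      · exfalso
        have hsub : {ω | U ω = Set.univ} ⊆ {ω | ¬ IsNowhereDense (LM ω)} := by
          intro ω hω
          simp only [Set.mem_setOf_eq]
          have hq : Q ω := ⟨0, hω⟩
          rw [hLMuniv ω hq]
          intro hnd
          have hnd' : interior (closure (Set.univ : Set Ξ)) = ∅ := hnd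
          rw [closure_univ, interior_univ] at hnd'
          exact Set.univ_nonempty.ne_empty hnd'
        exact hSUpos.ne' (measure_mono_null hsub (ae_iff.mp hNwd))
  · -- converse
    intro hT1 L hLc hLm hLinv
    by_cases hne : Nonempty Ξ
    swap
    · left
      refine Filter.Eventually.of_forall fun ω => ?_
      exact Set.eq_univ_of_forall fun ξ => (hne ⟨ξ⟩).elim
    by_cases h1 : P {ω | ¬ IsNowhereDense (L ω)} = 0
    · right; exact ae_iff.mpr h1
    left
    rw [ae_iff]
    by_contra hne2
    set V : Ω → Set Ξ := fun ω => (L ω)ᶜ with hV_def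
    have hVo : ∀ ω, IsOpen (V ω) := fun ω => (hLc ω).isOpen_compl
    have hVm : ∀ ξ, Measurable fun ω => infDist ξ (V ω)ᶜ := by
      intro ξ
      simpa only [hV_def, compl_compl] using hLm ξ
    have hVset : {ω | (V ω).Nonempty} = {ω | ¬ L ω = Set.univ} := by
      ext ω
      exact Set.nonempty_compl
    have hV0 : 0 < P {ω | (V ω).Nonempty} := by
      rw [hVset]
      exact pos_iff_ne_zero.mpr hne2
    have hS2 : 0 < P {ω | (interior (L ω)).Nonempty} := by
      refine pos_iff_ne_zero.mpr fun h => h1 ?_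
      refine measure_mono_null ?_ h
      intro ω hω
      simp only [Set.mem_setOf_eq] at hω ⊢
      rw [IsNowhereDense, (hLc ω).closure_eq] at hω
      exact Set.nonempty_iff_ne_empty.mpr hω
    -- a.e. n-step invariance contradiction builder
    have hcontra : ∀ (U : Ω → Set Ξ), (∀ ω, U ω ⊆ L ω) →
        ∀ n, P {ω | (giter θ g n (θinv^[n] ω) '' U (θinv^[n] ω) ∩ V ω).Nonempty} = 0 := by
      intro U hUL n
      refine measure_mono_null ?_ (ae_iff.mp (hchain L hLinv n))
      intro ω hω
      simp only [Set.mem_setOf_eq] at hω ⊢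
      intro hsub
      obtain ⟨ξ, hξU, hξV⟩ := hω
      obtain ⟨η, hη, rfl⟩ := hξU
      exact hξV (hsub ⟨η, hUL _ hη, rfl⟩)
    by_cases hb : P ({ω | (interior (L ω)).Nonempty} ∩ {ω | ¬ L ω = Set.univ}) = 0
    · -- branch (ii) : P {L = univ} > 0
      have hLu : 0 < P {ω | L ω = Set.univ} := by
        refine pos_iff_ne_zero.mpr fun h => hS2.ne' ?_
        refine le_zero_iff.mp ?_
        have hsub : {ω | (interior (L ω)).Nonempty} ⊆
            ({ω | (interior (L ω)).Nonempty} ∩ {ω | ¬ L ω = Set.univ}) ∪ {ω | L ω = Set.univ} := by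
          intro ω hω
          by_cases hu : L ω = Set.univ
          · exact Or.inr hu
          · exact Or.inl ⟨hω, hu⟩
        calc P {ω | (interior (L ω)).Nonempty}
            ≤ P (({ω | (interior (L ω)).Nonempty} ∩ {ω | ¬ L ω = Set.univ})
                ∪ {ω | L ω = Set.univ}) := measure_mono hsub
          _ ≤ P ({ω | (interior (L ω)).Nonempty} ∩ {ω | ¬ L ω = Set.univ})
                + P {ω | L ω = Set.univ} := measure_union_le _ _
          _ = 0 := by rw [hb, h, add_zero]
      set U1 : Ω → Set Ξ := fun ω => {ξ : Ξ | L ω = Set.univ} with hU1_def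
      have hU1cases : ∀ ω, U1 ω = Set.univ ∨ U1 ω = ∅ := by
        intro ω
        by_cases h : L ω = Set.univ
        · exact Or.inl (Set.eq_univ_of_forall fun ξ => h)
        · exact Or.inr (Set.eq_empty_iff_forall_notMem.mpr fun ξ hξ => h hξ)
      have hU1o : ∀ ω, IsOpen (U1 ω) := by
        intro ω
        rcases hU1cases ω with h | h <;> rw [h]
        · exact isOpen_univ
        · exact isOpen_empty
      have hU1m : ∀ ξ, Measurable fun ω => infDist ξ (U1 ω)ᶜ := by
        intro ξ
        have : (fun ω => infDist ξ (U1 ω)ᶜ) = fun _ => 0 := by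
          funext ω
          rcases hU1cases ω with h | h <;> rw [h]
          · rw [Set.compl_univ]; exact infDist_empty
          · rw [Set.compl_empty]; exact stmt18_infDist_univ ξ
        rw [this]
        exact measurable_const
      have hU1pos : 0 < P {ω | (U1 ω).Nonempty} := by
        refine lt_of_lt_of_le hLu (measure_mono fun ω hω => ?_)
        obtain ⟨ξ⟩ := hne
        exact ⟨ξ, hω⟩
      obtain ⟨n, hn⟩ := hT1 U1 V hU1o hU1m hVo hVm hU1pos hV0
      have hnull : P {ω | (giter θ g n (θinv^[n] ω) '' U1 (θinv^[n] ω) ∩ V ω).Nonempty} = 0 := by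
        refine measure_mono_null ?_ (ae_iff.mp (hchain L hLinv n))
        intro ω hω
        simp only [Set.mem_setOf_eq] at hω ⊢
        intro hsub
        obtain ⟨ξ, hξU, hξV⟩ := hω
        obtain ⟨η, hη, rfl⟩ := hξU
        have hLuniv : L (θinv^[n] ω) = Set.univ := hη
        refine hξV (hsub ⟨η, ?_, rfl⟩)
        rw [hLuniv]
        trivial
      exact hn.ne' hnull
    · -- branch (i)
      have hbpos : 0 < P ({ω | (interior (L ω)).Nonempty} ∩ {ω | ¬ L ω = Set.univ}) :=
        pos_iff_ne_zero.mpr hb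
      set U0 : Ω → Set Ξ := fun ω => {ξ | 0 < infDist ξ (L ω)ᶜ} with hU0_def
      have hU0o : ∀ ω, IsOpen (U0 ω) :=
        fun ω => isOpen_lt continuous_const (continuous_infDist_pt _)
      have hU0subL : ∀ ω, U0 ω ⊆ L ω := by
        intro ω ξ hξ
        have hξ' : 0 < infDist ξ (L ω)ᶜ := hξ
        by_contra h
        exact hξ'.ne' (infDist_zero_of_mem h)
      have hU0eq : ∀ ω, ¬ L ω = Set.univ → U0 ω = interior (L ω) := by
        intro ω hω
        have hcne : ((L ω)ᶜ).Nonempty := Set.nonempty_compl.mpr hω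
        ext ξ
        simp only [hU0_def, Set.mem_setOf_eq]
        constructor
        · intro h
          by_contra hi
          have hcl : ξ ∈ closure ((L ω)ᶜ) := by
            rw [closure_compl]
            exact hi
          exact h.ne' (infDist_zero_of_mem_closure hcl)
        · intro h
          have h2 : ξ ∉ closure ((L ω)ᶜ) := by
            rw [closure_compl]
            simpa using h
          have h3 : infDist ξ (L ω)ᶜ ≠ 0 := fun h0 =>
            h2 ((mem_closure_iff_infDist_zero hcne).mpr h0)
          exact lt_of_le_of_ne infDist_nonneg (Ne.symm h3)
      have hLcomplm : ∀ ξ : Ξ, Measurable fun ω => infDist ξ (L ω)ᶜ := by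
        intro ξ
        classical
        have hform : (fun ω => infDist ξ (L ω)ᶜ) = fun ω =>
            (⨅ n : ℕ, if 0 < infDist (TopologicalSpace.denseSeq Ξ n) (L ω)
              then edist ξ (TopologicalSpace.denseSeq Ξ n) else ⊤).toReal := by
          funext ω
          rcases Set.eq_empty_or_nonempty (L ω) with hE | hNE
          · rw [hE, Set.compl_empty, stmt18_infDist_univ ξ]
            have htop : ∀ n : ℕ, (if 0 < infDist (TopologicalSpace.denseSeq Ξ n) (∅ : Set Ξ)
                then edist ξ (TopologicalSpace.denseSeq Ξ n) else ⊤) = ⊤ := fun n =>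
              if_neg (by rw [infDist_empty]; exact lt_irrefl 0)
            simp [htop]
          · have hiff : ∀ η : Ξ, (0 < infDist η (L ω)) ↔ η ∈ (L ω)ᶜ := by
              intro η
              rw [Set.mem_compl_iff]
              exact ((hLc ω).notMem_iff_infDist_pos hNE).symm
            have h := stmt18_infEdist_image_open (O := (L ω)ᶜ) (hLc ω).isOpen_compl
              continuous_id ξ
            rw [Set.image_id] at h
            have hDI : infDist ξ (L ω)ᶜ = (EMetric.infEdist ξ (L ω)ᶜ).toReal := rfl
            rw [hDI, h]
            congr 1
            refine iInf_congr fun n => ?_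
            by_cases hc : 0 < infDist (TopologicalSpace.denseSeq Ξ n) (L ω)
            · rw [if_pos ((hiff _).mp hc), if_pos hc]; rfl
            · rw [if_neg (fun hm => hc ((hiff _).mpr hm)), if_neg hc]
        rw [hform]
        refine (Measurable.iInf fun n => ?_).ennreal_toReal
        exact Measurable.ite (measurableSet_lt measurable_const (hLm _)) measurable_const
          measurable_const
      have hU0m : ∀ ξ, Measurable fun ω => infDist ξ (U0 ω)ᶜ := by
        intro ξ
        have heq : (fun ω => infDist ξ (U0 ω)ᶜ) = fun ω => infDist ξ (L ω)ᶜ := by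
          funext ω
          by_cases hω : L ω = Set.univ
          · have h1 : U0 ω = ∅ := by
              rw [hU0_def]
              refine Set.eq_empty_iff_forall_notMem.mpr fun ξ' hξ' => ?_
              simp only [Set.mem_setOf_eq, hω, Set.compl_univ, infDist_empty] at hξ'
              exact lt_irrefl 0 hξ'
            rw [h1, Set.compl_empty, stmt18_infDist_univ, hω, Set.compl_univ, infDist_empty]
          · rw [hU0eq ω hω, ← closure_compl, infDist_closure]
        rw [heq]
        exact hLcomplm ξ
      have hU0pos : 0 < P {ω | (U0 ω).Nonempty} := by
        refine lt_of_lt_of_le hbpos (measure_mono ?_)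
        rintro ω ⟨hint, hnu⟩
        rw [Set.mem_setOf_eq, hU0eq ω hnu]
        exact hint
      obtain ⟨n, hn⟩ := hT1 U0 V hU0o hU0m hVo hVm hU0pos hV0
      exact hn.ne' (hcontra U0 hU0subL n)
end
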